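/- Under the growth condition (there exist b, c > 0 with F(z') − F(z) ≥ c(z'−z) for z ≤ z' in [ν−b, ν+b], ν = V@R_α^P(Z)), for any δ > 0, ε ∈ (0, b) and sample size N ≥ (1/2)c⁻²ε⁻²log(2/δ), the empirical Value-at-Risk satisfies P(|V@R_α^{P_N} − V@R_α^P(Z)| < ε) ≥ 1 − δ. -/

import Mathlib

open MeasureTheory ProbabilityTheory

/-- Empirical cdf from samples `Z 0, ..., Z (N-1)`. -/
noncomputable def empCdf {Ω : Type*} (Z : ℕ → Ω → ℝ) (N : ℕ) (ω : Ω) (z : ℝ) : ℝ :=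
  (N : ℝ)⁻¹ * ∑ i ∈ Finset.range N, if Z i ω ≤ z then (1 : ℝ) else 0

/-- Deterministic quantile stability lemma: if `G` is uniformly `c*ε'`-close to `F`
and `F` has the local growth property around `ν`, then the quantiles differ by at
most `ε'`. -/
lemma quantile_stable (F G : ℝ → ℝ) (hFmono : Monotone F)
    (α ν b c ε' : ℝ)
    (hSne : {z : ℝ | 1 - α ≤ F z}.Nonempty) (hSbdd : BddBelow {z : ℝ | 1 - α ≤ F z})
    (hν : ν = sInf {z : ℝ | 1 - α ≤ F z}) (hc : 0 < c) (hε' : 0 < ε') (hε'b : ε' < b)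
    (hgrowth : ∀ z z', ν - b ≤ z → z ≤ z' → z' ≤ ν + b → c * (z' - z) ≤ F z' - F z)
    (hTne : {z : ℝ | 1 - α ≤ G z}.Nonempty) (hTbdd : BddBelow {z : ℝ | 1 - α ≤ G z})
    (hclose : ∀ z, |G z - F z| ≤ c * ε') :
    |sInf {z : ℝ | 1 - α ≤ G z} - ν| ≤ ε' := by
  have hSle : ∀ z ∈ {z : ℝ | 1 - α ≤ F z}, ν ≤ z := fun z hz => hν ▸ csInf_le hSbdd hz
  have hFlt : ∀ w, w < ν → F w < 1 - α := by
    intro w hw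
    by_contra h
    push_neg at h
    exact absurd (hSle w h) (not_le.2 hw)
  -- upper bound
  have hup : sInf {z : ℝ | 1 - α ≤ G z} ≤ ν + ε' := by
    apply csInf_le hTbdd
    have hF1 : 1 - α + c * ε' ≤ F (ν + ε') := by
      apply le_of_forall_pos_le_add
      intro e he
      set η := min (e / c) ε' with hηdef
      have hη0 : 0 < η := lt_min (div_pos he hc) hε'
      have hηε' : η ≤ ε' := min_le_right _ _
      have hcη : c * η ≤ e := by
        have : η ≤ e / c := min_le_left _ _
        calc c * η ≤ c * (e / c) := by nlinarith
          _ = e := by field_simp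
      obtain ⟨z, hzS, hzlt⟩ := exists_lt_of_csInf_lt hSne
        (show sInf {z : ℝ | 1 - α ≤ F z} < ν + η by rw [← hν]; linarith)
      have hz1 : ν ≤ z := hSle z hzS
      have hgr := hgrowth z (ν + ε') (by linarith) (by linarith) (by linarith)
      have hzS' : 1 - α ≤ F z := hzS
      nlinarith
    have hcl := abs_le.mp (hclose (ν + ε'))
    show 1 - α ≤ G (ν + ε')
    linarith [hcl.1]
  -- lower bound
  have hlo : ν - ε' ≤ sInf {z : ℝ | 1 - α ≤ G z} := by
    apply le_csInf hTne
    intro s hs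
    by_contra hcon
    push_neg at hcon
    have hsν : s < ν - ε' := hcon
    set w := max ((s + (ν - ε')) / 2) (ν - (ε' + b) / 2) with hwdef
    have hw1 : s ≤ w := le_trans (by linarith) (le_max_left _ _)
    have hw2 : w < ν - ε' := max_lt (by linarith) (by linarith)
    have hw3 : ν - b ≤ w := le_trans (by linarith) (le_max_right _ _)
    have hgr := hgrowth w (w + ε') hw3 (by linarith) (by linarith)
    have h1 : F (w + ε') < 1 - α := hFlt _ (by linarith)
    have h2 : F s ≤ F w := hFmono hw1
    have hcl := abs_le.mp (hclose s)
    have hs' : 1 - α ≤ G s := hs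
    linarith [hcl.2]
  have := abs_le.mpr (show -ε' ≤ sInf {z : ℝ | 1 - α ≤ G z} - ν ∧
    sInf {z : ℝ | 1 - α ≤ G z} - ν ≤ ε' from ⟨by linarith, by linarith⟩)
  exact this

lemma empCdf_mono {Ω : Type*} (Z : ℕ → Ω → ℝ) (N : ℕ) (ω : Ω) :
    Monotone (empCdf Z N ω) := by
  intro a b hab
  unfold empCdf
  apply mul_le_mul_of_nonneg_left _ (by positivity)
  apply Finset.sum_le_sum
  intro i _
  split_ifs with h1 h2
  · norm_num
  · exact absurd (h1.trans hab) h2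
  · norm_num
  · norm_num

lemma empCdf_nonempty {Ω : Type*} (Z : ℕ → Ω → ℝ) (N : ℕ) (hN : 0 < N) (ω : Ω)
    (α : ℝ) (hα : 0 < α) :
    {z : ℝ | 1 - α ≤ empCdf Z N ω z}.Nonempty := by
  have hne : (Finset.range N).Nonempty := Finset.nonempty_range_iff.mpr hN.ne'
  set M := (Finset.range N).sup' hne (fun i => Z i ω) with hM
  refine ⟨M, ?_⟩
  have hsum : ∑ i ∈ Finset.range N, (if Z i ω ≤ M then (1 : ℝ) else 0) = N := by
    rw [Finset.sum_congr rfl (fun i hi => if_pos (Finset.le_sup' (fun j => Z j ω) hi))]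
    simp
  show 1 - α ≤ empCdf Z N ω M
  unfold empCdf
  rw [hsum]
  rw [inv_mul_cancel₀ (by exact_mod_cast hN.ne' : (N : ℝ) ≠ 0)]
  linarith

lemma empCdf_bddBelow {Ω : Type*} (Z : ℕ → Ω → ℝ) (N : ℕ) (hN : 0 < N) (ω : Ω)
    (α : ℝ) (hα : α < 1) :
    BddBelow {z : ℝ | 1 - α ≤ empCdf Z N ω z} := by
  have hne : (Finset.range N).Nonempty := Finset.nonempty_range_iff.mpr hN.ne'
  refine ⟨(Finset.range N).inf' hne (fun i => Z i ω), ?_⟩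
  intro s hs
  have hs' : 1 - α ≤ empCdf Z N ω s := hs
  by_contra hcon
  push_neg at hcon
  have hall : ∀ i ∈ Finset.range N, ¬ Z i ω ≤ s := by
    intro i hi h
    exact absurd ((Finset.inf'_le (fun j => Z j ω) hi).trans h) (not_le.2 hcon)
  have hsum : ∑ i ∈ Finset.range N, (if Z i ω ≤ s then (1 : ℝ) else 0) = 0 :=
    Finset.sum_eq_zero (fun i hi => if_neg (hall i hi))
  unfold empCdf at hs'
  rw [hsum, mul_zero] at hs'
  linarith

/-- Under the local growth condition, for `ε ∈ (0,b)`, `δ > 0` and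
`N ≥ (1/2) c⁻² ε⁻² log(2/δ)`, the empirical Value-at-Risk is within `ε`
of the true Value-at-Risk with probability at least `1 - δ`. -/
theorem stmt_9 {Ω : Type*} [MeasurableSpace Ω] (P : Measure Ω) [IsProbabilityMeasure P]
    (μ : Measure ℝ) [IsProbabilityMeasure μ]
    (Z : ℕ → Ω → ℝ) (hmeas : ∀ i, Measurable (Z i))
    (hlaw : ∀ i, Measure.map (Z i) P = μ)
    (hindep : iIndepFun Z P)
    (α : ℝ) (hα : α ∈ Set.Ioo (0 : ℝ) 1)
    (F : ℝ → ℝ) (hF : F = fun z => (μ (Set.Iic z)).toReal)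
    (ν : ℝ) (hν : ν = sInf {z : ℝ | 1 - α ≤ F z})
    (b c : ℝ) (hb : 0 < b) (hc : 0 < c)
    (hgrowth : ∀ z z', ν - b ≤ z → z ≤ z' → z' ≤ ν + b → c * (z' - z) ≤ F z' - F z)
    (N : ℕ) (hN : 0 < N)
    (hDKW : ∀ ε : ℝ, 0 < ε →
      (P {ω | ∃ z : ℝ, ε < |empCdf Z N ω z - F z|}).toReal ≤
        2 * Real.exp (-2 * N * ε ^ 2))
    (δ : ℝ) (hδ : 0 < δ) (ε : ℝ) (hε : ε ∈ Set.Ioo 0 b)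
    (hNsize : (1 / 2) * c⁻¹ ^ 2 * ε⁻¹ ^ 2 * Real.log (2 / δ) ≤ N) :
    1 - δ ≤ (P {ω | |sInf {z : ℝ | 1 - α ≤ empCdf Z N ω z} - ν| < ε}).toReal := by
  obtain ⟨hα0, hα1⟩ := hα
  obtain ⟨hε0, hεb⟩ := hε
  -- Monotonicity of F
  have hFmono : Monotone F := by
    rw [hF]
    intro a b' hab
    exact ENNReal.toReal_mono (measure_ne_top μ _)
      (measure_mono (Set.Iic_subset_Iic.2 hab))
  -- S is nonempty
  have hSne : {z : ℝ | 1 - α ≤ F z}.Nonempty := by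
    have h1 : Filter.Tendsto F Filter.atTop (nhds 1) := by
      rw [hF]
      have h0 := tendsto_measure_Iic_atTop μ
      rw [measure_univ] at h0
      have := (ENNReal.tendsto_toReal (by norm_num : (1 : ENNReal) ≠ ⊤)).comp h0
      simpa [Function.comp_def] using this
    obtain ⟨x, hx⟩ := (h1.eventually (eventually_gt_nhds (by linarith : 1 - α < 1))).exists
    exact ⟨x, le_of_lt hx⟩
  -- S is bounded below
  have hSbdd : BddBelow {z : ℝ | 1 - α ≤ F z} := by
    have h2 : Filter.Tendsto (fun x => (μ (Set.Ici x)).toReal) Filter.atBot (nhds 1) := by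
      have h0 := tendsto_measure_Ici_atBot μ
      rw [measure_univ] at h0
      have := (ENNReal.tendsto_toReal (by norm_num : (1 : ENNReal) ≠ ⊤)).comp h0
      simpa [Function.comp_def] using this
    obtain ⟨x, hx⟩ := (h2.eventually (eventually_gt_nhds (by linarith : α < 1))).exists
    refine ⟨x, fun s hs => ?_⟩
    by_contra hcon
    push_neg at hcon
    have hdisj : Disjoint (Set.Iic s) (Set.Ici x) := Set.Iic_disjoint_Ici.2 (not_le.2 hcon)
    have hle : μ (Set.Iic s) + μ (Set.Ici x) ≤ 1 := by
      rw [← measure_union hdisj measurableSet_Ici]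
      rw [← measure_univ (μ := μ)]
      exact measure_mono (Set.subset_univ _)
    have hle' : (μ (Set.Iic s)).toReal + (μ (Set.Ici x)).toReal ≤ 1 := by
      rw [← ENNReal.toReal_add (measure_ne_top μ _) (measure_ne_top μ _)]
      have := ENNReal.toReal_mono (by norm_num) hle
      simpa using this
    have hFs : 1 - α ≤ F s := hs
    rw [hF] at hFs
    simp only at hFs
    linarith
  -- key estimate for each ε' < ε
  have key : ∀ ε' : ℝ, ε' ∈ Set.Ioo 0 ε →
      1 - 2 * Real.exp (-2 * N * (c * ε') ^ 2) ≤
        (P {ω | |sInf {z : ℝ | 1 - α ≤ empCdf Z N ω z} - ν| < ε}).toReal := by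
    intro ε' ⟨hε'0, hε'ε⟩
    set A := {ω | |sInf {z : ℝ | 1 - α ≤ empCdf Z N ω z} - ν| < ε} with hA
    set B := {ω | ∃ z : ℝ, c * ε' < |empCdf Z N ω z - F z|} with hB
    have hsub : Set.univ ⊆ A ∪ B := by
      intro ω _
      by_cases hωB : ω ∈ B
      · exact Or.inr hωB
      · left
        rw [hB] at hωB
        simp only [Set.mem_setOf_eq, not_exists, not_lt] at hωB
        have hdet := quantile_stable F (empCdf Z N ω) hFmono α ν b c ε'
          hSne hSbdd hν hc hε'0 (by linarith) hgrowth
          (empCdf_nonempty Z N hN ω α hα0)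
          (empCdf_bddBelow Z N hN ω α hα1)
          (fun z => hωB z)
        exact lt_of_le_of_lt hdet hε'ε
    have h1le : (1 : ENNReal) ≤ P A + P B := by
      calc (1 : ENNReal) = P Set.univ := (measure_univ (μ := P)).symm
        _ ≤ P (A ∪ B) := measure_mono hsub
        _ ≤ P A + P B := measure_union_le _ _
    have hfin : P A + P B ≠ ⊤ :=
      ENNReal.add_ne_top.2 ⟨measure_ne_top P _, measure_ne_top P _⟩
    have h1le' : (1 : ℝ) ≤ (P A).toReal + (P B).toReal := by
      have := ENNReal.toReal_mono hfin h1le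
      rwa [ENNReal.toReal_one, ENNReal.toReal_add (measure_ne_top P _) (measure_ne_top P _)]
        at this
    have hDKW' := hDKW (c * ε') (by positivity)
    rw [← hB] at hDKW'
    linarith
  -- take the limit ε' → ε from the left
  have hlim : 1 - 2 * Real.exp (-2 * N * (c * ε) ^ 2) ≤
      (P {ω | |sInf {z : ℝ | 1 - α ≤ empCdf Z N ω z} - ν| < ε}).toReal := by
    have hcont : Filter.Tendsto (fun x : ℝ => 1 - 2 * Real.exp (-2 * N * (c * x) ^ 2))
        (nhdsWithin ε (Set.Iio ε)) (nhds (1 - 2 * Real.exp (-2 * N * (c * ε) ^ 2))) := by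
      apply Filter.Tendsto.mono_left _ nhdsWithin_le_nhds
      exact (Continuous.tendsto (by continuity) ε)
    refine le_of_tendsto hcont ?_
    filter_upwards [Ioo_mem_nhdsLT_of_mem (by constructor <;> linarith : ε ∈ Set.Ioc 0 ε)]
      with x hx using key x hx
  -- final numeric step
  have hlog : Real.log (2 / δ) ≤ 2 * c ^ 2 * ε ^ 2 * N := by
    have h := mul_le_mul_of_nonneg_left hNsize (by positivity : (0:ℝ) ≤ 2 * c ^ 2 * ε ^ 2)
    have heq : 2 * c ^ 2 * ε ^ 2 * ((1 / 2) * c⁻¹ ^ 2 * ε⁻¹ ^ 2 * Real.log (2 / δ))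
        = Real.log (2 / δ) := by
      field_simp
    rw [heq] at h
    linarith [h]
  have hexp : 2 * Real.exp (-2 * N * (c * ε) ^ 2) ≤ δ := by
    have h1 : -2 * N * (c * ε) ^ 2 ≤ Real.log (δ / 2) := by
      have h2 : Real.log (δ / 2) = -Real.log (2 / δ) := by
        rw [← Real.log_inv]
        norm_num
      rw [h2]
      have hring : (-2 * N * (c * ε) ^ 2 : ℝ) = -(2 * c ^ 2 * ε ^ 2 * N) := by ring
      rw [hring]
      linarith
    have h3 : Real.exp (-2 * N * (c * ε) ^ 2) ≤ δ / 2 := by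
      calc Real.exp (-2 * N * (c * ε) ^ 2) ≤ Real.exp (Real.log (δ / 2)) :=
        Real.exp_le_exp.mpr h1
        _ = δ / 2 := Real.exp_log (by positivity)
    linarith
  linarith
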